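/- Let α > 0 and 0 < r < 1, and set ψ(k) = e^{−αk^r}. Then lim_{n→∞} [ (1/n)·∑_{k=1}^∞ k·ψ(k+n) ] / [ ∑_{k=n}^∞ ψ(k) ] = 0. -/

import Mathlib

set_option maxHeartbeats 1000000
open Real Filter

lemma aux_summable {c r : ℝ} (hc : 0 < c) (hr : 0 < r) :
    Summable (fun j : ℕ => (j : ℝ) * Real.exp (-c * (j : ℝ) ^ r)) := by
  set m : ℕ := ⌈3 / r⌉₊ with hm
  have hrm : 3 ≤ r * m := by
    have h1 : 3 / r ≤ (m : ℝ) := Nat.le_ceil _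
    have h2 := mul_le_mul_of_nonneg_left h1 hr.le
    rwa [mul_comm r (3/r), div_mul_cancel₀ _ (ne_of_gt hr)] at h2
  apply Summable.of_nonneg_of_le
    (f := fun j : ℕ => ((m.factorial : ℝ) / c ^ m) * (1 / (j : ℝ) ^ 2))
  · intro j; positivity
  · intro j
    rcases Nat.eq_zero_or_pos j with rfl | hj
    · simp
    have hj1 : (1 : ℝ) ≤ (j : ℝ) := by exact_mod_cast hj
    have hj0 : (0 : ℝ) < (j : ℝ) := by linarith
    have h1 : (c * (j:ℝ) ^ r) ^ m / (m.factorial : ℝ) ≤ Real.exp (c * (j:ℝ) ^ r) :=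
      Real.pow_div_factorial_le_exp _ (by positivity) m
    have h2 : ((j : ℝ) ^ (3:ℕ) : ℝ) ≤ ((j:ℝ) ^ r) ^ m := by
      rw [← Real.rpow_natCast ((j:ℝ)^r) m, ← Real.rpow_mul hj0.le,
        ← Real.rpow_natCast (j:ℝ) 3]
      exact Real.rpow_le_rpow_of_exponent_le hj1 (by push_cast; exact hrm)
    have key : (j:ℝ)^(3:ℕ) * c ^ m ≤ (m.factorial:ℝ) * Real.exp (c * (j:ℝ)^r) := by
      have hf : (0:ℝ) < (m.factorial : ℝ) := by positivity
      calc (j:ℝ)^(3:ℕ) * c ^ m ≤ ((j:ℝ)^r)^m * c ^ m := by gcongr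
      _ = (c * (j:ℝ) ^ r) ^ m / (m.factorial : ℝ) * (m.factorial:ℝ) := by
            rw [mul_pow]; field_simp
      _ ≤ (m.factorial:ℝ) * Real.exp (c * (j:ℝ)^r) := by
            rw [mul_comm ((m.factorial:ℝ))]
            exact mul_le_mul_of_nonneg_right h1 hf.le
    have final : (j:ℝ) * Real.exp (-(c * (j:ℝ)^r)) ≤ (m.factorial:ℝ)/c^m * (1/(j:ℝ)^2) := by
      rw [Real.exp_neg, mul_one_div, div_div, ← div_eq_mul_inv]
      rw [div_le_div_iff₀ (Real.exp_pos _) (by positivity)]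
      calc (j:ℝ) * (c^m * (j:ℝ)^2) = (j:ℝ)^(3:ℕ) * c^m := by ring
      _ ≤ (m.factorial:ℝ) * Real.exp (c*(j:ℝ)^r) := key
      _ = _ := by ring
    simpa [neg_mul] using final
  · exact ((summable_one_div_nat_pow.mpr (by norm_num)).mul_left _)

lemma aux_summable' {c r : ℝ} (hc : 0 < c) (hr : 0 < r) :
    Summable (fun j : ℕ => Real.exp (-c * (j : ℝ) ^ r)) := by
  rw [← summable_nat_add_iff 1]
  apply Summable.of_nonneg_of_le
    (f := fun j : ℕ => ((j + 1 : ℕ) : ℝ) * Real.exp (-c * ((j + 1 : ℕ) : ℝ) ^ r))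
    (fun j => (Real.exp_pos _).le)
  · intro j
    have h1 : (1:ℝ) ≤ ((j + 1 : ℕ) : ℝ) := by exact_mod_cast Nat.one_le_iff_ne_zero.mpr (Nat.succ_ne_zero j)
    exact le_mul_of_one_le_left (Real.exp_pos _).le h1
  · exact (summable_nat_add_iff 1).mpr (aux_summable hc hr)

lemma chord {r s : ℝ} (hr0 : 0 < r) (hr1 : r < 1) (h0 : 0 ≤ s) (h1 : s ≤ 1) :
    1 + ((2:ℝ) ^ r - 1) * s ≤ (1 + s) ^ r := by
  have hc := (Real.concaveOn_rpow hr0.le hr1.le).2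
    (Set.mem_Ici.mpr (zero_le_one : (0:ℝ) ≤ 1))
    (Set.mem_Ici.mpr (by norm_num : (0:ℝ) ≤ 2))
    (by linarith : (0:ℝ) ≤ 1 - s) h0 (by ring : (1 - s) + s = 1)
  simp only [smul_eq_mul, Real.one_rpow, mul_one] at hc
  have e : 1 - s + s * 2 = 1 + s := by ring
  rw [e] at hc
  calc 1 + ((2:ℝ)^r - 1) * s = 1 - s + s * (2:ℝ)^r := by ring
  _ ≤ (1 + s) ^ r := hc

lemma low1 {r N j : ℝ} (hr0 : 0 < r) (hr1 : r < 1) (hN : 1 ≤ N) (hj : 0 ≤ j)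
    (hjN : j ≤ N) : N ^ r + ((2:ℝ)^r - 1) * j * N ^ (r - 1) ≤ (N + j) ^ r := by
  have hN0 : (0:ℝ) < N := by linarith
  have e1 : N + j = N * (1 + j / N) := by field_simp
  rw [e1, Real.mul_rpow hN0.le (by positivity)]
  have e2 := chord hr0 hr1 (div_nonneg hj hN0.le) ((div_le_one hN0).mpr hjN)
  have e3 : N ^ (r - 1) = N ^ r / N := by rw [Real.rpow_sub hN0, Real.rpow_one]
  calc N ^ r + ((2:ℝ)^r - 1) * j * N ^ (r - 1)
      = N ^ r * (1 + ((2:ℝ)^r - 1) * (j / N)) := by rw [e3]; field_simp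
  _ ≤ N ^ r * (1 + j / N) ^ r := by
      apply mul_le_mul_of_nonneg_left e2 (Real.rpow_nonneg hN0.le r)

lemma up1 {r N j : ℝ} (hr0 : 0 < r) (hr1 : r < 1) (hN : 0 < N) (hj : 0 ≤ j) :
    (N + j) ^ r ≤ N ^ r + r * j * N ^ (r - 1) := by
  have e1 : N + j = N * (1 + j / N) := by field_simp
  rw [e1, Real.mul_rpow hN.le (by positivity)]
  have hjN : (0:ℝ) ≤ j / N := by positivity
  have e2 : (1 + j / N) ^ r ≤ 1 + r * (j / N) :=
    rpow_one_add_le_one_add_mul_self (by linarith) hr0.le hr1.le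
  have e3 : N ^ (r - 1) = N ^ r / N := by rw [Real.rpow_sub hN, Real.rpow_one]
  calc N ^ r * (1 + j / N) ^ r ≤ N ^ r * (1 + r * (j / N)) :=
        mul_le_mul_of_nonneg_left e2 (Real.rpow_nonneg hN.le r)
  _ = N ^ r + r * j * N ^ (r - 1) := by rw [e3]; field_simp

lemma low2 {r N j : ℝ} (hr0 : 0 < r) (hN : 0 < N) (hNj : N ≤ j) :
    N ^ r + (1 - (2:ℝ)^(-r)) * j ^ r ≤ (N + j) ^ r := by
  have hj0 : (0:ℝ) < j := lt_of_lt_of_le hN hNj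
  have h2r : (0:ℝ) < (2:ℝ)^(-r) := Real.rpow_pos_of_pos (by norm_num) _
  have h1 : (2:ℝ)^r * N^r ≤ (N + j)^r := by
    rw [← Real.mul_rpow (by norm_num) hN.le]
    exact Real.rpow_le_rpow (by positivity) (by linarith) hr0.le
  have h2 : j ^ r ≤ (N + j) ^ r := Real.rpow_le_rpow hj0.le (by linarith) hr0.le
  have h3 : (2:ℝ)^(-r) * (2:ℝ)^r = 1 := by
    rw [← Real.rpow_add (by norm_num)]; simp
  have h4 : N ^ r ≤ (2:ℝ)^(-r) * (N + j)^r := by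
    calc N ^ r = (2:ℝ)^(-r) * ((2:ℝ)^r * N^r) := by rw [← mul_assoc, h3, one_mul]
    _ ≤ (2:ℝ)^(-r) * (N + j)^r := mul_le_mul_of_nonneg_left h1 h2r.le
  have h5 : (1:ℝ) ≤ (2:ℝ)^r := by
    rw [show (1:ℝ) = (2:ℝ)^(0:ℝ) by simp]
    exact Real.rpow_le_rpow_of_exponent_le one_le_two hr0.le
  have h6 : (2:ℝ)^(-r) ≤ 1 := by nlinarith
  have h7 : (1 - (2:ℝ)^(-r)) * j^r ≤ (1 - (2:ℝ)^(-r)) * (N+j)^r :=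
    mul_le_mul_of_nonneg_left h2 (by linarith)
  linarith

lemma habs_div (u NN Ψ P E : ℝ) (h1 : NN ≠ 0) (h2 : Ψ ≠ 0) (h3 : u ≠ 0) (h4 : E ≠ 0) :
    (1/NN * (Ψ * (P*u^2))) / (u * (Ψ * E⁻¹)) = E*P*(u/NN) := by
  field_simp

theorem stmt_14 (α r : ℝ) (hα : 0 < α) (hr0 : 0 < r) (hr1 : r < 1) :
    Filter.Tendsto
      (fun n : ℕ =>
        ((1 / (n : ℝ)) *
            ∑' k : ℕ, ((k + 1 : ℕ) : ℝ) * Real.exp (-α * ((k + 1 + n : ℕ) : ℝ) ^ r)) /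
          (∑' k : ℕ, Real.exp (-α * ((n + k : ℕ) : ℝ) ^ r)))
      Filter.atTop (nhds 0) := by
  have h2r : (1:ℝ) < (2:ℝ) ^ r := by
    rw [show (1:ℝ) = (2:ℝ)^(0:ℝ) by simp]
    exact Real.rpow_lt_rpow_of_exponent_lt one_lt_two hr0
  have h2r' : (2:ℝ)^(-r) < 1 := by
    rw [show (1:ℝ) = (2:ℝ)^(0:ℝ) by simp]
    exact Real.rpow_lt_rpow_of_exponent_lt one_lt_two (by linarith)
  set c₁ : ℝ := (2:ℝ)^r - 1 with hc₁def
  have hc₁ : 0 < c₁ := by simp only [hc₁def]; linarith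
  set c₂ : ℝ := 1 - (2:ℝ)^(-r) with hc₂def
  have hc₂ : 0 < c₂ := by simp only [hc₂def]; linarith
  have hsumK : Summable (fun j : ℕ => (j:ℝ) * Real.exp (-(α*c₂) * (j:ℝ)^r)) :=
    aux_summable (by positivity) hr0
  set K : ℝ := ∑' j : ℕ, (j:ℝ) * Real.exp (-(α*c₂) * (j:ℝ)^r) with hKdef
  have hK0 : 0 ≤ K := tsum_nonneg (fun j => by positivity)
  set a : ℝ := 1 + 1/(α*c₁) with hadef
  have ha1 : 1 ≤ a := by
    have : 0 ≤ 1/(α*c₁) := by positivity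
    simp only [hadef]; linarith
  set C : ℝ := Real.exp (α*r) * (a^2 + K) with hCdef
  apply squeeze_zero' (g := fun n : ℕ => C * (n:ℝ)^(-r))
  · filter_upwards with n
    apply div_nonneg
    · apply mul_nonneg (by positivity)
      exact tsum_nonneg (fun k => by positivity)
    · exact tsum_nonneg (fun k => by positivity)
  · filter_upwards [eventually_ge_atTop 1] with n hn
    set N : ℝ := (n : ℝ) with hNdef
    have hN : (1:ℝ) ≤ N := by rw [hNdef]; exact_mod_cast hn
    have hN0 : (0:ℝ) < N := by linarith
    set ψ : ℝ := Real.exp (-α * N^r) with hψdef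
    have hψ : 0 < ψ := Real.exp_pos _
    have hNr1 : (1:ℝ) ≤ N^(1-r) := Real.one_le_rpow hN (by linarith)
    have hNN : N^(r-1) * N^(1-r) = 1 := by
      rw [← Real.rpow_add hN0]; norm_num
    -- Denominator lower bound
    have hsum_den : Summable (fun k : ℕ => Real.exp (-α * ((n + k : ℕ) : ℝ) ^ r)) := by
      apply Summable.of_nonneg_of_le (fun k => (Real.exp_pos _).le)
        (f := fun k : ℕ => Real.exp (-α * (k : ℝ) ^ r)) _ (aux_summable' hα hr0)
      intro k
      apply Real.exp_le_exp.mpr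
      have hk : (k:ℝ) ≤ ((n + k : ℕ) : ℝ) := by push_cast; linarith
      have := Real.rpow_le_rpow (Nat.cast_nonneg k) hk hr0.le
      nlinarith
    set m : ℕ := ⌈N^(1-r)⌉₊ with hmdef
    have hm1 : N^(1-r) ≤ (m:ℝ) := Nat.le_ceil _
    have hm2 : (m:ℝ) < N^(1-r) + 1 := Nat.ceil_lt_add_one (by positivity)
    have hden : N^(1-r) * (ψ * Real.exp (-(α*r))) ≤
        ∑' k : ℕ, Real.exp (-α * ((n + k : ℕ) : ℝ) ^ r) := by
      have perterm : ∀ k ∈ Finset.range m,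
          ψ * Real.exp (-(α*r)) ≤ Real.exp (-α * ((n + k : ℕ) : ℝ) ^ r) := by
        intro k hk
        rw [Finset.mem_range] at hk
        have hkb : (k:ℝ) ≤ N^(1-r) := by
          have : (k:ℝ) + 1 ≤ (m:ℝ) := by exact_mod_cast hk
          linarith
        have hup : ((n + k : ℕ) : ℝ) ^ r ≤ N^r + r := by
          have hcast : ((n + k : ℕ) : ℝ) = N + (k:ℝ) := by push_cast; ring
          rw [hcast]
          calc (N + (k:ℝ))^r ≤ N^r + r * (k:ℝ) * N^(r-1) :=
                up1 hr0 hr1 hN0 (Nat.cast_nonneg k)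
          _ ≤ N^r + r * N^(1-r) * N^(r-1) := by
                have h5 : r * (k:ℝ) * N^(r-1) ≤ r * N^(1-r) * N^(r-1) := by
                  apply mul_le_mul_of_nonneg_right _ (Real.rpow_nonneg hN0.le _)
                  exact mul_le_mul_of_nonneg_left hkb hr0.le
                linarith
          _ = N^r + r := by
                rw [mul_assoc, mul_comm (N^(1-r)), hNN, mul_one]
        rw [hψdef, ← Real.exp_add]
        apply Real.exp_le_exp.mpr
        nlinarith
      calc N^(1-r) * (ψ * Real.exp (-(α*r))) ≤ (m:ℝ) * (ψ * Real.exp (-(α*r))) := by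
            apply mul_le_mul_of_nonneg_right hm1 (by positivity)
      _ = ∑ _k ∈ Finset.range m, ψ * Real.exp (-(α*r)) := by
            rw [Finset.sum_const, Finset.card_range, nsmul_eq_mul]
      _ ≤ ∑ k ∈ Finset.range m, Real.exp (-α * ((n + k : ℕ) : ℝ) ^ r) :=
            Finset.sum_le_sum perterm
      _ ≤ ∑' k : ℕ, Real.exp (-α * ((n + k : ℕ) : ℝ) ^ r) :=
            Summable.sum_le_tsum _ (fun i _ => (Real.exp_pos _).le) hsum_den
    -- Numerator upper bound
    set t : ℝ := α * c₁ * N^(r-1) with htdef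
    have ht : 0 < t := by
      have := Real.rpow_pos_of_pos hN0 (r-1); positivity
    set x : ℝ := Real.exp (-t) with hxdef
    have hx0 : 0 < x := Real.exp_pos _
    have hx1 : x < 1 := Real.exp_lt_one_iff.mpr (by linarith)
    have perterm : ∀ k : ℕ, ((k + 1 : ℕ) : ℝ) * Real.exp (-α * ((k + 1 + n : ℕ) : ℝ) ^ r) ≤
        ψ * (((k:ℝ)+1) * x^(k+1) + ((k:ℝ)+1) * Real.exp (-(α*c₂) * ((k:ℝ)+1)^r)) := by
      intro k
      set j : ℝ := (k:ℝ) + 1 with hjdef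
      have hj1 : (1:ℝ) ≤ j := by simp only [hjdef]; linarith [Nat.cast_nonneg (α := ℝ) k]
      have hj0 : (0:ℝ) < j := by linarith
      have hcast1 : ((k + 1 + n : ℕ) : ℝ) = N + j := by push_cast; ring
      have hcast2 : ((k + 1 : ℕ) : ℝ) = j := by push_cast; ring
      have hxpow : x ^ (k+1) = Real.exp (-(t * j)) := by
        rw [hxdef, ← Real.exp_nat_mul]
        congr 1
        push_cast
        ring
      rw [hcast1, hcast2]
      rcases le_or_gt j N with hc | hc
      · have hlow := low1 hr0 hr1 hN hj0.le hc
        have hle : j * Real.exp (-α * (N + j)^r) ≤ ψ * (j * x^(k+1)) := by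
          rw [hxpow, hψdef, ← mul_assoc, mul_comm ψ j, mul_assoc, ← Real.exp_add]
          apply mul_le_mul_of_nonneg_left _ hj0.le
          apply Real.exp_le_exp.mpr
          have : α * (N^r + c₁ * j * N^(r-1)) ≤ α * (N+j)^r :=
            mul_le_mul_of_nonneg_left hlow hα.le
          simp only [htdef]
          nlinarith
        calc j * Real.exp (-α * (N + j)^r) ≤ ψ * (j * x^(k+1)) := hle
        _ ≤ _ := by
            have : 0 ≤ j * Real.exp (-(α*c₂) * j^r) := by positivity
            nlinarith
      · have hlow := low2 hr0 hN0 hc.le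
        have hle : j * Real.exp (-α * (N + j)^r) ≤ ψ * (j * Real.exp (-(α*c₂) * j^r)) := by
          rw [hψdef, ← mul_assoc, mul_comm ψ j, mul_assoc, ← Real.exp_add]
          apply mul_le_mul_of_nonneg_left _ hj0.le
          apply Real.exp_le_exp.mpr
          have : α * (N^r + c₂ * j^r) ≤ α * (N+j)^r := by
            apply mul_le_mul_of_nonneg_left _ hα.le
            simp only [hc₂def]; linarith [hlow]
          nlinarith
        calc j * Real.exp (-α * (N + j)^r) ≤ ψ * (j * Real.exp (-(α*c₂) * j^r)) := hle
        _ ≤ _ := by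
            have : 0 ≤ j * x^(k+1) := by positivity
            nlinarith
    have hsumg1 : Summable (fun k : ℕ => ((k:ℝ)+1) * x^(k+1)) := by
      have hbase : Summable (fun j : ℕ => (j:ℝ) * x^j) := by
        have := hasSum_coe_mul_geometric_of_norm_lt_one (𝕜 := ℝ)
          (r := x) (by rw [Real.norm_eq_abs, abs_of_pos hx0]; exact hx1)
        exact this.summable
      have := (summable_nat_add_iff 1).mpr hbase
      apply this.congr
      intro k; push_cast; ring
    have hsumg2 : Summable (fun k : ℕ => ((k:ℝ)+1) * Real.exp (-(α*c₂) * ((k:ℝ)+1)^r)) := by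
      have := (summable_nat_add_iff 1).mpr hsumK
      apply this.congr
      intro k; push_cast; ring
    have hnum : ∑' k : ℕ, ((k + 1 : ℕ) : ℝ) * Real.exp (-α * ((k + 1 + n : ℕ) : ℝ) ^ r) ≤
        ψ * ((a^2 + K) * (N^(1-r))^2) := by
      have hsum_rhs : Summable (fun k : ℕ =>
          ψ * (((k:ℝ)+1) * x^(k+1) + ((k:ℝ)+1) * Real.exp (-(α*c₂) * ((k:ℝ)+1)^r))) :=
        ((hsumg1.add hsumg2).mul_left ψ)
      have hsum_lhs : Summable (fun k : ℕ =>
          ((k + 1 : ℕ) : ℝ) * Real.exp (-α * ((k + 1 + n : ℕ) : ℝ) ^ r)) :=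
        Summable.of_nonneg_of_le (fun k => by positivity) perterm hsum_rhs
      calc ∑' k : ℕ, ((k + 1 : ℕ) : ℝ) * Real.exp (-α * ((k + 1 + n : ℕ) : ℝ) ^ r)
          ≤ ∑' k : ℕ, ψ * (((k:ℝ)+1) * x^(k+1) + ((k:ℝ)+1) * Real.exp (-(α*c₂) * ((k:ℝ)+1)^r)) :=
            Summable.tsum_le_tsum perterm hsum_lhs hsum_rhs
      _ = ψ * ((∑' k : ℕ, ((k:ℝ)+1) * x^(k+1)) +
            ∑' k : ℕ, ((k:ℝ)+1) * Real.exp (-(α*c₂) * ((k:ℝ)+1)^r)) := by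
            rw [tsum_mul_left, Summable.tsum_add hsumg1 hsumg2]
      _ ≤ ψ * ((a * N^(1-r))^2 + K) := by
            apply mul_le_mul_of_nonneg_left _ hψ.le
            have hS1 : (∑' k : ℕ, ((k:ℝ)+1) * x^(k+1)) ≤ (a * N^(1-r))^2 := by
              have hbase : Summable (fun j : ℕ => (j:ℝ) * x^j) :=
                (hasSum_coe_mul_geometric_of_norm_lt_one (𝕜 := ℝ)
                  (r := x) (by rw [Real.norm_eq_abs, abs_of_pos hx0]; exact hx1)).summable
              have hshift : ∑' j : ℕ, (j:ℝ) * x^j = ∑' k : ℕ, ((k:ℝ)+1) * x^(k+1) := by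
                rw [Summable.tsum_eq_zero_add hbase]
                simp only [Nat.cast_zero, zero_mul, pow_zero, zero_add]
                apply tsum_congr
                intro k
                push_cast
                ring
              rw [← hshift, tsum_coe_mul_geometric_of_norm_lt_one
                (by rw [Real.norm_eq_abs, abs_of_pos hx0]; exact hx1)]
              -- x / (1-x)^2 ≤ (a * N^(1-r))^2
              have h1x : 0 < 1 - x := by linarith
              have hxle : x ≤ 1/(1+t) := by
                rw [hxdef, Real.exp_neg, inv_eq_one_div]
                apply one_div_le_one_div_of_le (by linarith)
                linarith [Real.add_one_le_exp t]
              have h1xge : t/(1+t) ≤ 1 - x := by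
                have h9 : 1/(1+t) = 1 - t/(1+t) := by field_simp; ring
                rw [h9] at hxle; linarith
              have hinv : 1/(1-x) ≤ 1 + 1/t := by
                have htt : 0 < t/(1+t) := by positivity
                calc 1/(1-x) ≤ 1/(t/(1+t)) := one_div_le_one_div_of_le htt h1xge
                _ = (1+t)/t := by rw [one_div_div]
                _ = 1 + 1/t := by field_simp; ring
              have h1t : 1 + 1/t ≤ a * N^(1-r) := by
                have he : 1/t = N^(1-r)/(α*c₁) := by
                  rw [div_eq_div_iff ht.ne' (by positivity : (0:ℝ) < α*c₁).ne', one_mul, htdef]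
                  calc α * c₁ = α * c₁ * (N^(r-1) * N^(1-r)) := by rw [hNN, mul_one]
                  _ = N^(1-r) * (α * c₁ * N^(r-1)) := by ring
                rw [he, hadef]
                have : N^(1-r)/(α*c₁) ≤ N^(1-r) * (1/(α*c₁)) := by rw [mul_one_div]
                nlinarith [Real.rpow_nonneg hN0.le (1-r), one_div_pos.mpr (by positivity : (0:ℝ) < α*c₁)]
              calc x / (1-x)^2 ≤ 1 / (1-x)^2 := by
                    gcongr
              _ = (1/(1-x))^2 := by rw [div_pow, one_pow]
              _ ≤ (a * N^(1-r))^2 := pow_le_pow_left₀ (by positivity) (hinv.trans h1t) 2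
            have hS2 : (∑' k : ℕ, ((k:ℝ)+1) * Real.exp (-(α*c₂) * ((k:ℝ)+1)^r)) = K := by
              rw [hKdef, Summable.tsum_eq_zero_add hsumK]
              simp only [Nat.cast_zero, zero_mul, zero_add]
              apply tsum_congr
              intro k
              push_cast
              ring_nf
            rw [hS2]
            exact add_le_add hS1 le_rfl
      _ ≤ ψ * ((a^2 + K) * (N^(1-r))^2) := by
            apply mul_le_mul_of_nonneg_left _ hψ.le
            have h6 : 1 ≤ (N^(1-r))^2 := by nlinarith
            calc (a*N^(1-r))^2 + K = a^2*(N^(1-r))^2 + K*1 := by rw [mul_pow]; ring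
            _ ≤ a^2*(N^(1-r))^2 + K*(N^(1-r))^2 := by nlinarith
            _ = (a^2+K)*(N^(1-r))^2 := by ring
    have hden_pos : 0 < N^(1-r) * (ψ * Real.exp (-(α*r))) := by positivity
    have htop : 1/N * (∑' k : ℕ, ((k + 1 : ℕ) : ℝ) * Real.exp (-α * ((k + 1 + n : ℕ) : ℝ) ^ r))
        ≤ 1/N * (ψ * ((a^2+K)*(N^(1-r))^2)) :=
      mul_le_mul_of_nonneg_left hnum (by positivity)
    calc (1/N * (∑' k : ℕ, ((k + 1 : ℕ) : ℝ) * Real.exp (-α * ((k + 1 + n : ℕ) : ℝ) ^ r))) /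
          (∑' k : ℕ, Real.exp (-α * ((n + k : ℕ) : ℝ) ^ r))
        ≤ (1/N * (ψ * ((a^2+K)*(N^(1-r))^2))) / (N^(1-r) * (ψ * Real.exp (-(α*r)))) := by
          refine div_le_div₀ ?_ htop hden_pos hden
          refine mul_nonneg (by positivity) (mul_nonneg hψ.le (mul_nonneg
            (add_nonneg (sq_nonneg a) hK0) (sq_nonneg _)))
    _ = C * N^(-r) := by
        have e2 : N^(-r) * N = N^(1-r) := by
          nth_rewrite 2 [← Real.rpow_one N]
          rw [← Real.rpow_add hN0, neg_add_eq_sub]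
        have e3 : N^(-r) = N^(1-r)/N := by
          rw [eq_div_iff hN0.ne']; exact e2
        rw [hCdef, e3, Real.exp_neg]
        exact habs_div (N^(1-r)) N ψ (a^2+K) (Real.exp (α*r)) hN0.ne' hψ.ne'
          (by positivity : (0:ℝ) < N^(1-r)).ne' (Real.exp_pos _).ne'
  · have h1 : Tendsto (fun n : ℕ => ((n:ℝ))^(-r)) atTop (nhds 0) :=
      (tendsto_rpow_neg_atTop hr0).comp tendsto_natCast_atTop_atTop
    have := h1.const_mul C
    simpa using this
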